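/- Let Z : E → F be a linear map between finite-dimensional real vector spaces, Q : E → ℝ a quadratic form that is negative-definite on Ker Z, and V ⊆ F a strict convex cone. Then the convex cone generated by {x ∈ E : Z(x) ∈ V, Q(x) ≥ 0} is strict. -/

import Mathlib

open Set Filter Topology

/-- The conical hull of a set `S`: the smallest convex cone containing `S`. -/
def coneHull {E : Type*} [AddCommMonoid E] [SMul ℝ E] (S : Set E) : Set E :=
  ⋂₀ {C : Set E | S ⊆ C ∧ (∀ r : ℝ, 0 < r → ∀ x ∈ C, r • x ∈ C) ∧
      ∀ x ∈ C, ∀ y ∈ C, x + y ∈ C}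

set_option linter.unnecessarySimpa false
set_option linter.unusedVariables false
set_option linter.deprecated false

lemma myIsCompactConvexHull {F : Type*} [NormedAddCommGroup F] [NormedSpace ℝ F]
    [FiniteDimensional ℝ F] {K : Set F} (hK : IsCompact K) : IsCompact (convexHull ℝ K) := by
  rcases K.eq_empty_or_nonempty with rfl | ⟨k₀, hk₀⟩
  · simpa using isCompact_empty
  set n := Module.finrank ℝ F + 1 with hn
  have hT : IsCompact ((stdSimplex ℝ (Fin n)) ×ˢ (Set.pi Set.univ (fun _ : Fin n => K))) :=
    (isCompact_stdSimplex _ _).prod (isCompact_univ_pi fun _ => hK)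
  have hφ : Continuous (fun q : (Fin n → ℝ) × (Fin n → F) => ∑ i, q.1 i • q.2 i) := by
    exact continuous_finset_sum _ fun i _ =>
      ((continuous_apply i).comp continuous_fst).smul ((continuous_apply i).comp continuous_snd)
  have himg : convexHull ℝ K =
      (fun q : (Fin n → ℝ) × (Fin n → F) => ∑ i, q.1 i • q.2 i) ''
        ((stdSimplex ℝ (Fin n)) ×ˢ (Set.pi Set.univ (fun _ : Fin n => K))) := by
    apply Subset.antisymm
    · intro x hx
      obtain ⟨ι, hfin, z, w, hzK, haff, hwpos, hwsum, hx⟩ :=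
        eq_pos_convex_span_of_mem_convexHull hx
      have hne : Nonempty ι := by
        by_contra h
        rw [not_nonempty_iff] at h
        simp [Finset.univ_eq_empty] at hwsum
      have hcard : Fintype.card ι ≤ n := by
        refine le_trans haff.card_le_finrank_succ ?_
        exact Nat.add_le_add_right (Submodule.finrank_le _) 1
      obtain ⟨e⟩ : Nonempty (ι ↪ Fin n) := by
        rw [Function.Embedding.nonempty_iff_card_le]
        simpa using hcard
      set w' : Fin n → ℝ := Function.extend e w 0 with hw'
      set z' : Fin n → F := Function.extend e z (fun _ => k₀) with hz'
      have hzero : ∀ j : Fin n, (¬ ∃ i, e i = j) → w' j = 0 := by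
        intro j hj
        simp [hw', Function.extend_def, hj]
      have hsum_eqR : ∀ (g : ι → ℝ) (f : Fin n → ℝ),
          (∀ j, (¬ ∃ i, e i = j) → f j = 0) → (∀ i : ι, f (e i) = g i) →
          ∑ j, f j = ∑ i, g i := by
        intro g f h0 hei
        have h1 : ∑ j ∈ Finset.univ.map e, f j = ∑ j, f j := by
          apply Finset.sum_subset (Finset.subset_univ _)
          intro j _ hj
          apply h0
          rintro ⟨i, hi⟩
          exact hj (Finset.mem_map.2 ⟨i, Finset.mem_univ i, hi⟩)
        rw [← h1, Finset.sum_map]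
        exact Finset.sum_congr rfl fun i _ => hei i
      have hsum_eqF : ∀ (g : ι → F) (f : Fin n → F),
          (∀ j, (¬ ∃ i, e i = j) → f j = 0) → (∀ i : ι, f (e i) = g i) →
          ∑ j, f j = ∑ i, g i := by
        intro g f h0 hei
        have h1 : ∑ j ∈ Finset.univ.map e, f j = ∑ j, f j := by
          apply Finset.sum_subset (Finset.subset_univ _)
          intro j _ hj
          apply h0
          rintro ⟨i, hi⟩
          exact hj (Finset.mem_map.2 ⟨i, Finset.mem_univ i, hi⟩)
        rw [← h1, Finset.sum_map]
        exact Finset.sum_congr rfl fun i _ => hei i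
      have hwe : ∀ i : ι, w' (e i) = w i := fun i => e.injective.extend_apply _ _ _
      have hze : ∀ i : ι, z' (e i) = z i := fun i => e.injective.extend_apply _ _ _
      refine ⟨(w', z'), ⟨⟨?_, ?_⟩, ?_⟩, ?_⟩
      · intro j
        show 0 ≤ w' j
        rcases Classical.em (∃ i, e i = j) with ⟨i, rfl⟩ | hj
        · rw [hwe]; exact (hwpos i).le
        · rw [hzero j hj]
      · show ∑ j, w' j = 1
        rw [hsum_eqR w w' hzero hwe]; exact hwsum
      · intro j _
        show z' j ∈ K
        rcases Classical.em (∃ i, e i = j) with ⟨i, rfl⟩ | hj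
        · rw [hze]; exact hzK ⟨i, rfl⟩
        · simp only [hz', Function.extend_def, dif_neg hj]
          exact hk₀
      · show ∑ j, w' j • z' j = x
        rw [← hx]
        exact hsum_eqF (fun i => w i • z i) (fun j => w' j • z' j) (fun j hj => by show w' j • z' j = 0; rw [hzero j hj, zero_smul]) (fun i => by show w' (e i) • z' (e i) = w i • z i; rw [hwe, hze])
    · rintro x ⟨⟨w, z⟩, ⟨hw, hz⟩, rfl⟩
      have h1 : ∀ i ∈ Finset.univ, 0 ≤ w i := fun i _ => hw.1 i
      have h2 : ∑ i, w i = 1 := hw.2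
      have := Finset.centerMass_mem_convexHull (Finset.univ) h1 (by rw [h2]; norm_num)
        (fun i _ => hz i (mem_univ i))
      rwa [Finset.centerMass_eq_of_sum_1 _ _ h2] at this
  rw [himg]
  exact hT.image hφ


theorem myQuadraticContinuous {E : Type*} [NormedAddCommGroup E] [NormedSpace ℝ E]
    [FiniteDimensional ℝ E] (Q : QuadraticForm ℝ E) : Continuous fun x => Q x := by
  have h := QuadraticMap.associated_eq_self_apply ℝ Q
  have heq : (fun x => Q x) = fun x =>
      ((LinearMap.toContinuousLinearMap.toLinearMap.comp
        (QuadraticMap.associated (R := ℝ) Q)) x) x := by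
    funext x
    simp [h x]
  rw [heq]
  exact (LinearMap.toContinuousLinearMap.toLinearMap.comp
    (QuadraticMap.associated (R := ℝ) Q)).continuous_of_finiteDimensional.clm_apply continuous_id

open Filter Topology

open Filter Topology

theorem myLemmaA {E F : Type*} [NormedAddCommGroup E] [NormedSpace ℝ E] [FiniteDimensional ℝ E]
    [NormedAddCommGroup F] [NormedSpace ℝ F]
    (Z : E →ₗ[ℝ] F) (Q : QuadraticForm ℝ E)
    (hQ : ∀ x : E, Z x = 0 → x ≠ 0 → Q x < 0) :
    ∃ ε : ℝ, 0 < ε ∧ ∀ x : E, 0 ≤ Q x → ε * ‖x‖ ≤ ‖Z x‖ := by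
  by_contra h
  push_neg at h
  -- build a unit-norm sequence
  have key : ∀ n : ℕ, ∃ u : E, ‖u‖ = 1 ∧ 0 ≤ Q u ∧ ‖Z u‖ < 1 / (n + 1) := by
    intro n
    obtain ⟨x, hQx, hZx⟩ := h (1 / (n + 1)) (by positivity)
    have hx0 : x ≠ 0 := by
      rintro rfl
      simp at hZx
    have hxn : (0:ℝ) < ‖x‖ := norm_pos_iff.2 hx0
    refine ⟨‖x‖⁻¹ • x, ?_, ?_, ?_⟩
    · rw [norm_smul, norm_inv, norm_norm, inv_mul_cancel₀ hxn.ne']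
    · rw [QuadraticMap.map_smul]
      positivity
    · rw [map_smul, norm_smul, norm_inv, norm_norm]
      calc ‖x‖⁻¹ * ‖Z x‖ < ‖x‖⁻¹ * (1 / (n + 1) * ‖x‖) := by
            apply mul_lt_mul_of_pos_left hZx (by positivity)
        _ = 1 / (n + 1) := by field_simp
  choose u hu1 hu2 hu3 using key
  have husphere : ∀ n, u n ∈ Metric.sphere (0:E) 1 := by
    intro n; simpa [Metric.mem_sphere, dist_eq_norm] using hu1 n
  obtain ⟨x₀, hx₀mem, φ, hφmono, hφlim⟩ :=
    (isCompact_sphere (0:E) 1).tendsto_subseq husphere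
  have hx₀norm : ‖x₀‖ = 1 := by simpa [dist_eq_norm] using hx₀mem
  have hZx₀ : Z x₀ = 0 := by
    have hcont : Tendsto (fun n => Z (u (φ n))) atTop (nhds (Z x₀)) :=
      (Z.continuous_of_finiteDimensional.tendsto x₀).comp hφlim
    have hzero : Tendsto (fun n => Z (u (φ n))) atTop (nhds 0) := by
      rw [tendsto_zero_iff_norm_tendsto_zero]
      apply squeeze_zero (fun n => norm_nonneg _) (fun n => (hu3 (φ n)).le)
      have : Tendsto (fun n : ℕ => 1 / ((n:ℝ) + 1)) atTop (nhds 0) := tendsto_one_div_add_atTop_nhds_zero_nat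
      exact this.comp (hφmono.tendsto_atTop.comp tendsto_id) |>.congr (fun n => rfl)
    exact tendsto_nhds_unique hcont hzero
  have hQx₀ : 0 ≤ Q x₀ := by
    have hcont : Tendsto (fun n => Q (u (φ n))) atTop (nhds (Q x₀)) :=
      ((myQuadraticContinuous Q).tendsto x₀).comp hφlim
    exact le_of_tendsto_of_tendsto tendsto_const_nhds hcont
      (Filter.Eventually.of_forall fun n => hu2 (φ n))
  exact absurd (hQ x₀ hZx₀ (by intro h; rw [h] at hx₀norm; simp at hx₀norm)) hQx₀.not_gt

theorem myLemmaB {F : Type*} [NormedAddCommGroup F] [NormedSpace ℝ F] [FiniteDimensional ℝ F]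
    (W : Set F) (hWclosed : IsClosed W) (hWconv : Convex ℝ W)
    (hWscale : ∀ r : ℝ, 0 < r → ∀ x ∈ W, r • x ∈ W)
    (hWpointed : ∀ w ∈ W, -w ∈ W → w = 0) :
    ∃ (f : F →L[ℝ] ℝ) (c : ℝ), 0 < c ∧ ∀ u ∈ W, c * ‖u‖ ≤ f u := by
  set K := W ∩ Metric.sphere (0:F) 1 with hKdef
  have hunit : ∀ u ∈ W, u ≠ 0 → ‖u‖⁻¹ • u ∈ K := by
    intro u hu hu0
    have hn : (0:ℝ) < ‖u‖ := norm_pos_iff.2 hu0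
    constructor
    · exact hWscale _ (by positivity) u hu
    · simp [norm_smul, inv_mul_cancel₀ hn.ne']
  rcases K.eq_empty_or_nonempty with hKe | hKne
  · -- W ⊆ {0}
    refine ⟨0, 1, one_pos, fun u hu => ?_⟩
    have : u = 0 := by
      by_contra hu0
      exact absurd (hunit u hu hu0) (by rw [hKe]; exact notMem_empty _)
    simp [this]
  · have hKcpt : IsCompact K := ((isCompact_sphere (0:F) 1).inter_left hWclosed)
    have hDcpt : IsCompact (convexHull ℝ K) := myIsCompactConvexHull hKcpt
    have hKW : K ⊆ W := inter_subset_left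
    have hDW : convexHull ℝ K ⊆ W := convexHull_min hKW hWconv
    have h0notin : (0:F) ∉ convexHull ℝ K := by
      intro h0
      have hext : (0:F) ∈ (convexHull ℝ K).extremePoints ℝ := by
        rw [mem_extremePoints]
        refine ⟨h0, fun x₁ hx₁ x₂ hx₂ hseg => ?_⟩
        obtain ⟨a, b, ha, hb, hab, habe⟩ := hseg
        have h1 : a • x₁ = -(b • x₂) := by
          rw [eq_neg_iff_add_eq_zero]; exact habe
        have hax₁ : a • x₁ ∈ W := hWscale a ha x₁ (hDW hx₁)
        have hbx₂ : b • x₂ ∈ W := hWscale b hb x₂ (hDW hx₂)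
        have hax₁0 : a • x₁ = 0 := by
          apply hWpointed _ hax₁
          rw [h1, neg_neg]; exact hbx₂
        have hx₁0 : x₁ = 0 := by
          rcases smul_eq_zero.1 hax₁0 with h | h
          · exact absurd h ha.ne'
          · exact h
        have hx₂0 : x₂ = 0 := by
          have : b • x₂ = 0 := by rw [← neg_eq_zero, ← h1, hax₁0]
          rcases smul_eq_zero.1 this with h | h
          · exact absurd h hb.ne'
          · exact h
        exact ⟨hx₁0, hx₂0⟩
      have : (0:F) ∈ K := extremePoints_convexHull_subset hext
      have : ‖(0:F)‖ = 1 := by simpa [dist_eq_norm] using this.2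
      simp at this
    obtain ⟨f, c, hfc, hcf⟩ := geometric_hahn_banach_point_closed
      (convex_convexHull ℝ K) hDcpt.isClosed h0notin
    have hc0 : 0 < c := by simpa using hfc
    refine ⟨f, c, hc0, fun u hu => ?_⟩
    rcases eq_or_ne u 0 with rfl | hu0
    · simp
    · have hn : (0:ℝ) < ‖u‖ := norm_pos_iff.2 hu0
      have hk : ‖u‖⁻¹ • u ∈ K := hunit u hu hu0
      have hfk : c < f (‖u‖⁻¹ • u) := hcf _ (subset_convexHull ℝ K hk)
      have : f u = ‖u‖ * f (‖u‖⁻¹ • u) := by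
        have := f.map_smul ‖u‖ (‖u‖⁻¹ • u)
        rw [smul_inv_smul₀ hn.ne'] at this
        rw [this, smul_eq_mul]
      rw [this, mul_comm c ‖u‖]
      exact mul_le_mul_of_nonneg_left hfk.le hn.le

theorem stmt7main {E F : Type*} [NormedAddCommGroup E] [NormedSpace ℝ E] [FiniteDimensional ℝ E]
    [NormedAddCommGroup F] [NormedSpace ℝ F] [FiniteDimensional ℝ F]
    (Z : E →ₗ[ℝ] F) (Q : QuadraticForm ℝ E)
    (hQ : ∀ x : E, Z x = 0 → x ≠ 0 → Q x < 0)
    (V : Set F)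
    (hVscale : ∀ r : ℝ, 0 < r → ∀ x ∈ V, r • x ∈ V)
    (hVadd : ∀ x ∈ V, ∀ y ∈ V, x + y ∈ V)
    (hVstrict : ¬ ∃ (p v : F), v ≠ 0 ∧ ∀ t : ℝ, p + t • v ∈ closure V)
    (hA' : ∃ ε : ℝ, 0 < ε ∧ ∀ x : E, 0 ≤ Q x → ε * ‖x‖ ≤ ‖Z x‖)
    (lemB : ∀ (W : Set F), IsClosed W → Convex ℝ W →
      (∀ r : ℝ, 0 < r → ∀ x ∈ W, r • x ∈ W) →
      (∀ w ∈ W, -w ∈ W → w = 0) →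
      ∃ (f : F →L[ℝ] ℝ) (c : ℝ), 0 < c ∧ ∀ u ∈ W, c * ‖u‖ ≤ f u) :
    ¬ ∃ (p v : E), v ≠ 0 ∧ ∀ t : ℝ,
        p + t • v ∈ closure (coneHull {x : E | Z x ∈ V ∧ 0 ≤ Q x}) := by
  rintro ⟨p, v, hv, hline⟩
  obtain ⟨ε, hε, hA⟩ := hA'
  set W := closure V with hW
  -- W properties
  have hVW : V ⊆ W := subset_closure
  have hWclosed : IsClosed W := isClosed_closure
  have hWscale : ∀ r : ℝ, 0 < r → ∀ u ∈ W, r • u ∈ W := by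
    intro r hr u hu
    rcases mem_closure_iff_seq_limit.1 hu with ⟨s, hs, hslim⟩
    exact mem_closure_iff_seq_limit.2 ⟨fun n => r • s n, fun n => hVscale r hr _ (hs n),
      hslim.const_smul r⟩
  have hVconv : Convex ℝ V := by
    intro x hx y hy a b ha hb hab
    rcases eq_or_lt_of_le ha with rfl | ha'
    · have : b = 1 := by linarith
      simpa [this] using hy
    rcases eq_or_lt_of_le hb with rfl | hb'
    · have : a = 1 := by linarith
      simpa [this] using hx
    exact hVadd _ (hVscale a ha' x hx) _ (hVscale b hb' y hy)
  have hWconv : Convex ℝ W := hVconv.closure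
  have hWpointed : ∀ w ∈ W, -w ∈ W → w = 0 := by
    intro w hw hnw
    by_contra hw0
    apply hVstrict
    refine ⟨0, w, hw0, fun t => ?_⟩
    rcases lt_trichotomy t 0 with ht | ht | ht
    · have : t • w = (-t) • (-w) := by module
      rw [zero_add, this]
      exact hWscale (-t) (by linarith) _ hnw
    · rw [ht, zero_smul, add_zero]
      have hlim : Tendsto (fun n : ℕ => (1 / ((n:ℝ) + 1)) • w) atTop (nhds ((0:ℝ) • w)) :=
        tendsto_one_div_add_atTop_nhds_zero_nat.smul_const w
      rw [zero_smul] at hlim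
      exact hWclosed.mem_of_tendsto hlim
        (Eventually.of_forall fun n => hWscale _ (by positivity) _ hw)
    · rw [zero_add]
      exact hWscale t ht _ hw
  obtain ⟨f, c, hc, hB⟩ := lemB W hWclosed hWconv hWscale hWpointed
  -- the good closed cone C
  set S : Set E := {x : E | Z x ∈ V ∧ 0 ≤ Q x} with hS
  set C : Set E := {x : E | c * ε * ‖x‖ ≤ f (Z x)} with hC
  have hCclosed : IsClosed C := by
    apply isClosed_le
    · exact continuous_const.mul continuous_norm
    · exact f.continuous.comp Z.continuous_of_finiteDimensional
  have hSC : S ⊆ C := by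
    rintro x ⟨hZx, hQx⟩
    have h1 : ε * ‖x‖ ≤ ‖Z x‖ := hA x hQx
    have h2 : c * ‖Z x‖ ≤ f (Z x) := hB _ (hVW hZx)
    have : c * (ε * ‖x‖) ≤ c * ‖Z x‖ := mul_le_mul_of_nonneg_left h1 hc.le
    calc c * ε * ‖x‖ = c * (ε * ‖x‖) := by ring
      _ ≤ c * ‖Z x‖ := this
      _ ≤ f (Z x) := h2
  have hCscale : ∀ r : ℝ, 0 < r → ∀ x ∈ C, r • x ∈ C := by
    intro r hr x hx
    show c * ε * ‖r • x‖ ≤ f (Z (r • x))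
    rw [map_smul, map_smul, norm_smul, Real.norm_eq_abs, abs_of_pos hr, smul_eq_mul]
    calc c * ε * (r * ‖x‖) = r * (c * ε * ‖x‖) := by ring
      _ ≤ r * f (Z x) := mul_le_mul_of_nonneg_left hx hr.le
  have hCadd : ∀ x ∈ C, ∀ y ∈ C, x + y ∈ C := by
    intro x hx y hy
    show c * ε * ‖x + y‖ ≤ f (Z (x + y))
    rw [map_add, map_add]
    calc c * ε * ‖x + y‖ ≤ c * ε * (‖x‖ + ‖y‖) :=
          mul_le_mul_of_nonneg_left (norm_add_le x y) (by positivity)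
      _ = c * ε * ‖x‖ + c * ε * ‖y‖ := by ring
      _ ≤ f (Z x) + f (Z y) := add_le_add hx hy
  have hcone : coneHull S ⊆ C := sInter_subset_of_mem ⟨hSC, hCscale, hCadd⟩
  have hclos : closure (coneHull S) ⊆ C := closure_minimal hcone hCclosed
  -- line inside C
  have hlineC : ∀ t : ℝ, c * ε * ‖p + t • v‖ ≤ f (Z p) + t * f (Z v) := by
    intro t
    have := hclos (hline t)
    rw [hC, mem_setOf_eq, map_add, map_smul, map_add, map_smul, smul_eq_mul] at this
    exact this
  set a := f (Z p) with ha
  set b := f (Z v) with hb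
  set d := c * ε with hd
  have hd0 : 0 < d := by positivity
  have hvn : (0:ℝ) < ‖v‖ := norm_pos_iff.2 hv
  have ha0 : 0 ≤ a := by
    have := hlineC 0
    simp at this
    calc (0:ℝ) ≤ d * ‖p‖ := by positivity
      _ ≤ a := this
  set T : ℝ := a / (d * ‖v‖) + 1 with hT
  have hT0 : 0 < T := by positivity
  have hplus := hlineC T
  have hminus := hlineC (-T)
  have hdiff : (p + T • v) - (p + (-T) • v) = (2 * T) • v := by module
  have htri : ‖(2 * T) • v‖ ≤ ‖p + T • v‖ + ‖p + (-T) • v‖ := by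
    rw [← hdiff]; exact norm_sub_le _ _
  have hnorm : ‖(2 * T) • v‖ = 2 * T * ‖v‖ := by
    rw [norm_smul, Real.norm_eq_abs, abs_of_pos (by linarith)]
  have hkey : d * (2 * T * ‖v‖) ≤ 2 * a := by
    have h1 : d * ‖(2*T) • v‖ ≤ d * (‖p + T • v‖ + ‖p + (-T) • v‖) :=
      mul_le_mul_of_nonneg_left htri hd0.le
    rw [hnorm] at h1
    nlinarith [hplus, hminus]
  have hTle : T ≤ a / (d * ‖v‖) := by
    rw [le_div_iff₀ (by positivity)]
    nlinarith
  linarith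

/-- For a linear map `Z : E → F`, a quadratic form `Q` negative-definite on
`Ker Z`, and a strict convex cone `V ⊆ F`, the convex cone generated by
`{x | Z x ∈ V, Q x ≥ 0}` is strict (its closure contains no line). -/
theorem stmt7 {E F : Type*} [NormedAddCommGroup E] [NormedSpace ℝ E] [FiniteDimensional ℝ E]
    [NormedAddCommGroup F] [NormedSpace ℝ F] [FiniteDimensional ℝ F]
    (Z : E →ₗ[ℝ] F) (Q : QuadraticForm ℝ E)
    (hQ : ∀ x : E, Z x = 0 → x ≠ 0 → Q x < 0)
    (V : Set F)
    (hVscale : ∀ r : ℝ, 0 < r → ∀ x ∈ V, r • x ∈ V)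
    (hVadd : ∀ x ∈ V, ∀ y ∈ V, x + y ∈ V)
    (hVstrict : ¬ ∃ (p v : F), v ≠ 0 ∧ ∀ t : ℝ, p + t • v ∈ closure V) :
    ¬ ∃ (p v : E), v ≠ 0 ∧ ∀ t : ℝ,
        p + t • v ∈ closure (coneHull {x : E | Z x ∈ V ∧ 0 ≤ Q x}) :=
  stmt7main Z Q hQ V hVscale hVadd hVstrict (myLemmaA Z Q hQ)
    (fun W h1 h2 h3 h4 => myLemmaB W h1 h2 h3 h4)
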